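/- If X is a Rudin space (i.e., for every topological space Y, every separately continuous function f : X × Y → ℝ is of the first Baire class) and Y is a t-embedded subspace of X (i.e., there exists a continuous linear-in-the-pointwise-topology extender E : C_p(Y) → C_p(X) with E(f)|_Y = f for all f ∈ C_p(Y)), then Y is a Rudin space. -/

import Mathlib

/-- `f` is of the first Baire class: a pointwise limit of continuous functions. -/
def FirstBaireClass {W : Type*} [TopologicalSpace W] (f : W → ℝ) : Prop :=
  ∃ g : ℕ → W → ℝ, (∀ n, Continuous (g n)) ∧
    ∀ w, Filter.Tendsto (fun n => g n w) Filter.atTop (nhds (f w))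

/-- `X` is a Rudin space: for every topological space `Y`, every separately
continuous function `X × Y → ℝ` is of the first Baire class. -/
def IsRudinSpace (X : Type u) [TopologicalSpace X] : Prop :=
  ∀ (Y : Type u) (_ : TopologicalSpace Y) (f : X × Y → ℝ),
    ((∀ y, Continuous fun x => f (x, y)) ∧ (∀ x, Continuous fun y => f (x, y))) →
    FirstBaireClass f

/-- The topology of pointwise convergence on `C(W, ℝ)`. -/
def pointwiseTop (W : Type*) [TopologicalSpace W] : TopologicalSpace C(W, ℝ) :=
  TopologicalSpace.induced (fun f : C(W, ℝ) => (f : W → ℝ)) Pi.topologicalSpace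

/-- A t-embedded subspace of a Rudin space is Rudin: if there is a linear extender
`E : C_p(Y) → C_p(X)` continuous in the pointwise topologies with `E f |_Y = f`,
then `Y` is a Rudin space. -/
theorem rudin_of_t_embedded (X : Type u) [TopologicalSpace X] (hX : IsRudinSpace X)
    (Y : Set X) (E : C(Y, ℝ) → C(X, ℝ))
    (hadd : ∀ f g : C(Y, ℝ), E (f + g) = E f + E g)
    (hsmul : ∀ (c : ℝ) (f : C(Y, ℝ)), E (c • f) = c • E f)
    (hcont : @Continuous _ _ (pointwiseTop Y) (pointwiseTop X) E)
    (hext : ∀ (f : C(Y, ℝ)) (y : Y), E f (y : X) = f y) :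
    IsRudinSpace Y := by
  intro Z tZ f ⟨h1, h2⟩
  -- the slices of f as elements of C(Y, ℝ)
  set φ : Z → C(Y, ℝ) := fun z => ⟨fun y => f (y, z), h1 z⟩ with hφ
  -- φ is continuous into the pointwise topology
  have hφcont : @Continuous Z C(Y, ℝ) tZ (pointwiseTop Y) φ := by
    rw [pointwiseTop, continuous_induced_rng]
    exact continuous_pi fun y => h2 y
  -- push f forward to X × Z
  set F : X × Z → ℝ := fun p => E (φ p.2) p.1 with hF
  have hF1 : ∀ z, Continuous fun x => F (x, z) := fun z => (E (φ z)).continuous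
  have hF2 : ∀ x, Continuous fun z => F (x, z) := by
    intro x
    have heval : @Continuous C(X, ℝ) ℝ (pointwiseTop X) _ (fun g => g x) := by
      have : @Continuous C(X, ℝ) (X → ℝ) (pointwiseTop X) _
          (fun g : C(X, ℝ) => (g : X → ℝ)) := by
        rw [pointwiseTop]; exact continuous_induced_dom
      exact @Continuous.comp C(X, ℝ) (X → ℝ) ℝ (pointwiseTop X) _ _ _ _
        (continuous_apply x) this
    exact @Continuous.comp Z C(X, ℝ) ℝ tZ (pointwiseTop X) _ _ _ heval
      (@Continuous.comp Z C(Y, ℝ) C(X, ℝ) tZ (pointwiseTop Y) (pointwiseTop X)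
        _ _ hcont hφcont)
  obtain ⟨g, hgc, hgl⟩ := hX Z tZ F ⟨hF1, hF2⟩
  refine ⟨fun n p => g n (p.1, p.2), fun n => ?_, fun p => ?_⟩
  · exact (hgc n).comp ((continuous_subtype_val.comp continuous_fst).prodMk
      continuous_snd)
  · have := hgl (p.1, p.2)
    rw [hF] at this
    simp only at this
    rw [hext (φ p.2) p.1] at this
    exact this
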